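/- For any connected graph G of order n ≥ 2 with maximum degree Δ, γ_oidR(G) ≥ (2/Δ)·α(G) + β(G), where α(G) is the independence number and β(G) is the vertex cover number. -/

import Mathlib

open SimpleGraph Finset

/-- Outer independent double Roman dominating function. -/
def IsOIDRDF {V : Type*} (G : SimpleGraph V) (f : V → ℕ) : Prop :=
  (∀ v, f v ≤ 3) ∧
  (∀ v, f v = 0 → (∃ u, G.Adj v u ∧ f u = 3) ∨
    (∃ u w, u ≠ w ∧ G.Adj v u ∧ G.Adj v w ∧ f u = 2 ∧ f w = 2)) ∧
  (∀ v, f v = 1 → ∃ u, G.Adj v u ∧ 2 ≤ f u) ∧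
  (∀ u v, G.Adj u v → f u = 0 → f v ≠ 0)

/-- Outer independent double Roman domination number. -/
noncomputable def oidRNum {V : Type*} (G : SimpleGraph V) [Fintype V] : ℕ :=
  sInf {w | ∃ f : V → ℕ, IsOIDRDF G f ∧ w = ∑ v, f v}

/-- Outer independent Roman dominating function. -/
def IsOIRDF {V : Type*} (G : SimpleGraph V) (f : V → ℕ) : Prop :=
  (∀ v, f v ≤ 2) ∧
  (∀ v, f v = 0 → ∃ u, G.Adj v u ∧ f u = 2) ∧
  (∀ u v, G.Adj u v → f u = 0 → f v ≠ 0)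

/-- Outer independent Roman domination number. -/
noncomputable def oiRNum {V : Type*} (G : SimpleGraph V) [Fintype V] : ℕ :=
  sInf {w | ∃ f : V → ℕ, IsOIRDF G f ∧ w = ∑ v, f v}

/-- Vertex cover number. -/
noncomputable def coverNum {V : Type*} (G : SimpleGraph V) [Fintype V] : ℕ :=
  sInf {k | ∃ S : Finset V, S.card = k ∧ ∀ u v, G.Adj u v → u ∈ S ∨ v ∈ S}

/-- Domination number. -/
noncomputable def domNum {V : Type*} (G : SimpleGraph V) [Fintype V] : ℕ :=
  sInf {k | ∃ S : Finset V, S.card = k ∧ ∀ v, v ∉ S → ∃ u ∈ S, G.Adj v u}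

/-- Independence number. -/
noncomputable def indNum {V : Type*} (G : SimpleGraph V) [Fintype V] : ℕ :=
  sSup {k | ∃ S : Finset V, S.card = k ∧ ∀ u ∈ S, ∀ v ∈ S, ¬ G.Adj u v}

/-- Maximum degree. -/
noncomputable def maxDeg {V : Type*} (G : SimpleGraph V) [Fintype V] : ℕ :=
  sSup (Set.range fun v => Nat.card {u | G.Adj v u})

/-- Underlying relation for the corona product. -/
def coronaRel {V W : Type*} (G : SimpleGraph V) (H : SimpleGraph W) :
    (V ⊕ V × W) → (V ⊕ V × W) → Prop
  | Sum.inl u, Sum.inl v => G.Adj u v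
  | Sum.inl u, Sum.inr p => u = p.1
  | Sum.inr p, Sum.inl u => u = p.1
  | Sum.inr p, Sum.inr q => p.1 = q.1 ∧ H.Adj p.2 q.2

/-- The corona product `G ⊙ H`. -/
def corona {V W : Type*} (G : SimpleGraph V) (H : SimpleGraph W) :
    SimpleGraph (V ⊕ V × W) :=
  SimpleGraph.fromRel (coronaRel G H)

section Aux
variable {V : Type*} [Fintype V]

lemma aux_deg_le_maxDeg [DecidableEq V] (G : SimpleGraph V) [DecidableRel G.Adj] (v : V) :
    G.degree v ≤ maxDeg G := by
  have h : Nat.card {u | G.Adj v u} = G.degree v := by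
    rw [← SimpleGraph.card_neighborSet_eq_degree, ← Nat.card_eq_fintype_card]; rfl
  rw [← h]
  exact le_csSup (Set.Finite.bddAbove (Set.finite_range _)) ⟨v, rfl⟩

lemma aux_sum_decomp (f : V → ℕ) :
    ∑ v, f v = (Fintype.card V - (univ.filter (fun v => f v = 0)).card) + ∑ v, (f v - 1) := by
  classical
  have h1 : ∀ v, f v = (if f v ≠ 0 then 1 else 0) + (f v - 1) := by
    intro v; by_cases h : f v = 0 <;> simp [h] <;> omega
  calc ∑ v, f v = ∑ v, ((if f v ≠ 0 then 1 else 0) + (f v - 1)) := by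
        exact Finset.sum_congr rfl fun v _ => h1 v
    _ = (univ.filter (fun v => f v ≠ 0)).card + ∑ v, (f v - 1) := by
        rw [Finset.sum_add_distrib, Finset.sum_boole]; norm_num
    _ = (Fintype.card V - (univ.filter (fun v => f v = 0)).card) + ∑ v, (f v - 1) := by
        have hcompl : (univ.filter (fun v => f v ≠ 0)) = (univ.filter (fun v => f v = 0))ᶜ := by
          ext x; simp
        rw [hcompl, Finset.card_compl]

lemma aux_counting [DecidableEq V] (G : SimpleGraph V) [DecidableRel G.Adj]
    (f : V → ℕ) (hf : IsOIDRDF G f) :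
    2 * (univ.filter (fun v => f v = 0)).card ≤ maxDeg G * ∑ v, (f v - 1) := by
  set Z : Finset V := univ.filter (fun v => f v = 0) with hZ
  set g : V → ℕ := fun u => f u - 1 with hg
  have step1 : 2 * Z.card ≤ ∑ v ∈ Z, ∑ u ∈ G.neighborFinset v, g u := by
    have hconst : 2 * Z.card = ∑ _v ∈ Z, 2 := by
      rw [Finset.sum_const, smul_eq_mul, mul_comm]
    rw [hconst]
    apply Finset.sum_le_sum
    intro v hv
    have hv0 : f v = 0 := by simpa [hZ] using hv
    rcases hf.2.1 v hv0 with ⟨u, hadj, hu3⟩ | ⟨u, w, huw, hadju, hadjw, hu2, hw2⟩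
    · have hmem : u ∈ G.neighborFinset v := by simpa [SimpleGraph.mem_neighborFinset] using hadj
      have h2 : 2 * 1 ≤ g u := by simp [hg, hu3]
      calc 2 * 1 ≤ g u := h2
        _ ≤ ∑ u ∈ G.neighborFinset v, g u :=
          Finset.single_le_sum (fun i _ => Nat.zero_le _) hmem
    · have hsub : ({u, w} : Finset V) ⊆ G.neighborFinset v := by
        intro x hx
        simp only [Finset.mem_insert, Finset.mem_singleton] at hx
        rcases hx with rfl | rfl <;> simpa [SimpleGraph.mem_neighborFinset]
      have := Finset.sum_le_sum_of_subset (f := g) hsub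
      rw [Finset.sum_pair huw] at this
      simpa [hg, hu2, hw2] using this
  have step2 : ∑ v ∈ Z, ∑ u ∈ G.neighborFinset v, g u
      = ∑ u, (Z.filter (fun v => G.Adj v u)).card * g u := by
    have h1 : ∀ v, ∑ u ∈ G.neighborFinset v, g u = ∑ u, if G.Adj v u then g u else 0 := by
      intro v
      rw [SimpleGraph.neighborFinset_eq_filter, Finset.sum_filter]
    calc ∑ v ∈ Z, ∑ u ∈ G.neighborFinset v, g u
        = ∑ v ∈ Z, ∑ u, if G.Adj v u then g u else 0 :=
          Finset.sum_congr rfl fun v _ => h1 v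
      _ = ∑ u, ∑ v ∈ Z, if G.Adj v u then g u else 0 := Finset.sum_comm
      _ = ∑ u, (Z.filter (fun v => G.Adj v u)).card * g u := by
          apply Finset.sum_congr rfl
          intro u _
          rw [← Finset.sum_filter, Finset.sum_const, smul_eq_mul]
  have step3 : ∀ u, (Z.filter (fun v => G.Adj v u)).card ≤ maxDeg G := by
    intro u
    have h1 : Z.filter (fun v => G.Adj v u) ⊆ G.neighborFinset u := by
      intro x hx
      simp only [Finset.mem_filter] at hx
      simpa [SimpleGraph.mem_neighborFinset] using hx.2.symm
    exact le_trans (Finset.card_le_card h1) (aux_deg_le_maxDeg G u)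
  calc 2 * Z.card ≤ ∑ u, (Z.filter (fun v => G.Adj v u)).card * g u := step2 ▸ step1
    _ ≤ ∑ u, maxDeg G * g u :=
        Finset.sum_le_sum fun u _ => Nat.mul_le_mul_right _ (step3 u)
    _ = maxDeg G * ∑ u, g u := by rw [Finset.mul_sum]

end Aux

theorem stmt11 {V : Type*} [Fintype V] (G : SimpleGraph V)
    (hn : 2 ≤ Fintype.card V) (hc : G.Connected) :
    (2 / (maxDeg G : ℝ)) * (indNum G : ℝ) + (coverNum G : ℝ) ≤ (oidRNum G : ℝ) := by
  classical
  set n := Fintype.card V with hn'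
  -- an edge out of some vertex
  obtain ⟨v₀, w₀, hvw₀⟩ := Fintype.exists_pair_of_one_lt_card hn
  obtain ⟨p⟩ := hc.preconnected v₀ w₀
  have hedge : ∃ u, G.Adj v₀ u := by
    cases p with
    | nil => exact absurd rfl hvw₀
    | cons h q => exact ⟨_, h⟩
  obtain ⟨u₀, hadj₀⟩ := hedge
  have hΔ1 : 1 ≤ maxDeg G := by
    have h1 : 1 ≤ G.degree v₀ := by
      rw [Nat.one_le_iff_ne_zero, ← Nat.pos_iff_ne_zero, SimpleGraph.degree_pos_iff_exists_adj]
      exact ⟨u₀, hadj₀⟩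
    exact le_trans h1 (aux_deg_le_maxDeg G v₀)
  -- independence number facts
  have hIndBdd : ∀ k ∈ {k | ∃ S : Finset V, S.card = k ∧ ∀ u ∈ S, ∀ v ∈ S, ¬ G.Adj u v},
      k ≤ n := by
    rintro k ⟨S, rfl, -⟩
    exact Finset.card_le_univ S
  have hIndBdd' : BddAbove {k | ∃ S : Finset V, S.card = k ∧ ∀ u ∈ S, ∀ v ∈ S, ¬ G.Adj u v} :=
    ⟨n, fun k hk => hIndBdd k hk⟩
  have hIndNe : {k | ∃ S : Finset V, S.card = k ∧ ∀ u ∈ S, ∀ v ∈ S, ¬ G.Adj u v}.Nonempty :=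
    ⟨0, ∅, by simp, by simp⟩
  obtain ⟨S, hScard0, hSind⟩ := Nat.sSup_mem hIndNe hIndBdd'
  have hScard : S.card = indNum G := hScard0
  clear hScard0
  have hαn : indNum G ≤ n := by
    rw [← hScard]; exact Finset.card_le_univ S
  have hβ : coverNum G ≤ n - indNum G := by
    apply Nat.sInf_le
    refine ⟨Sᶜ, ?_, ?_⟩
    · rw [Finset.card_compl, hScard, ← hn']
    · intro u v huv
      by_contra hcon
      push_neg at hcon
      simp only [Finset.mem_compl, not_not] at hcon
      exact hSind u hcon.1 v hcon.2 huv
  -- the minimum OIDRDF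
  have hONe : {w | ∃ f : V → ℕ, IsOIDRDF G f ∧ w = ∑ v, f v}.Nonempty := by
    refine ⟨∑ v, (3:ℕ), fun _ => 3, ⟨fun v => le_refl 3, fun v h => by simp at h,
      fun v h => by simp at h, fun u v _ h => by simp at h⟩, rfl⟩
  obtain ⟨f, hf, heq⟩ := Nat.sInf_mem hONe
  have heq' : oidRNum G = ∑ v, f v := heq
  clear heq
  set Z : Finset V := univ.filter (fun v => f v = 0) with hZ
  have hW : ∑ v, f v = (n - Z.card) + ∑ v, (f v - 1) := aux_sum_decomp f
  have hzα : Z.card ≤ indNum G := by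
    apply le_csSup hIndBdd'
    refine ⟨Z, rfl, ?_⟩
    intro a ha b hb hab
    have ha0 : f a = 0 := by simpa [hZ] using ha
    have hb0 : f b = 0 := by simpa [hZ] using hb
    exact hf.2.2.2 a b hab ha0 hb0
  by_cases hΔ2 : 2 ≤ maxDeg G
  · -- main case
    have hcnt : 2 * Z.card ≤ maxDeg G * ∑ v, (f v - 1) := aux_counting G f hf
    have hΔpos : (0:ℝ) < (maxDeg G : ℝ) := by exact_mod_cast lt_of_lt_of_le one_pos hΔ1
    have hβR : (coverNum G : ℝ) ≤ (n : ℝ) - (indNum G : ℝ) := by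
      have := hβ
      have h2 : ((n - indNum G : ℕ) : ℝ) = (n:ℝ) - (indNum G : ℝ) := by
        rw [Nat.cast_sub hαn]
      calc (coverNum G : ℝ) ≤ ((n - indNum G : ℕ) : ℝ) := by exact_mod_cast this
        _ = (n:ℝ) - (indNum G : ℝ) := h2
    have hzn : Z.card ≤ n := le_trans hzα hαn
    have hWR : (oidRNum G : ℝ) = ((n:ℝ) - (Z.card : ℝ)) + ((∑ v, (f v - 1) : ℕ) : ℝ) := by
      rw [heq', hW]
      push_cast [Nat.cast_sub hzn]
      ring
    set E : ℝ := ((∑ v, (f v - 1) : ℕ) : ℝ) with hE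
    have hcntR : 2 * (Z.card : ℝ) ≤ (maxDeg G : ℝ) * E := by
      rw [hE]; exact_mod_cast hcnt
    have hΔ2R : (2:ℝ) ≤ (maxDeg G : ℝ) := by exact_mod_cast hΔ2
    have hzαR : (Z.card : ℝ) ≤ (indNum G : ℝ) := by exact_mod_cast hzα
    have key : 2 * (indNum G : ℝ) ≤ (maxDeg G : ℝ) * (E + (indNum G : ℝ) - (Z.card : ℝ)) := by
      nlinarith [mul_le_mul_of_nonneg_right hΔ2R (sub_nonneg.mpr hzαR)]
    have key2 : 2 / (maxDeg G : ℝ) * (indNum G : ℝ) ≤ E + (indNum G : ℝ) - (Z.card : ℝ) := by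
      rw [div_mul_eq_mul_div, div_le_iff₀ hΔpos]
      nlinarith [key]
    rw [hWR]
    linarith
  · -- maxDeg = 1 : the graph is a single edge
    have hΔeq : maxDeg G = 1 := le_antisymm (by omega) hΔ1
    have hdeg1 : ∀ x : V, G.degree x ≤ 1 := fun x => le_trans (aux_deg_le_maxDeg G x) hΔeq.le
    have hN : ∀ a b, G.Adj a b → (a = v₀ ∨ a = u₀) → (b = v₀ ∨ b = u₀) := by
      intro a b hab ha
      rcases ha with rfl | rfl
      · right
        have h1 : u₀ ∈ G.neighborFinset a := by simpa [SimpleGraph.mem_neighborFinset] using hadj₀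
        have h2 : b ∈ G.neighborFinset a := by simpa [SimpleGraph.mem_neighborFinset] using hab
        exact Finset.card_le_one.mp (hdeg1 a) b h2 u₀ h1
      · left
        have h1 : v₀ ∈ G.neighborFinset a := by
          simpa [SimpleGraph.mem_neighborFinset] using hadj₀.symm
        have h2 : b ∈ G.neighborFinset a := by simpa [SimpleGraph.mem_neighborFinset] using hab
        exact Finset.card_le_one.mp (hdeg1 a) b h2 v₀ h1
    have hwalk : ∀ (a b : V) (p : G.Walk a b), (a = v₀ ∨ a = u₀) → (b = v₀ ∨ b = u₀) := by
      intro a b p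
      induction p with
      | nil => exact id
      | cons h q ih => intro ha; exact ih (hN _ _ h ha)
    have hall : ∀ x : V, x = v₀ ∨ x = u₀ := by
      intro x
      obtain ⟨p⟩ := hc.preconnected v₀ x
      exact hwalk _ _ p (Or.inl rfl)
    have hne : v₀ ≠ u₀ := hadj₀.ne
    -- indNum = 1
    have hα1 : indNum G = 1 := by
      have hub : ∀ k ∈ {k | ∃ S : Finset V, S.card = k ∧ ∀ u ∈ S, ∀ v ∈ S, ¬ G.Adj u v},
          k ≤ 1 := by
        rintro k ⟨T, rfl, hT⟩
        by_contra hk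
        push_neg at hk
        obtain ⟨a, ha, b, hb, hab⟩ := Finset.one_lt_card.mp hk
        rcases hall a with rfl | rfl <;> rcases hall b with rfl | rfl
        · exact hab rfl
        · exact hT _ ha _ hb hadj₀
        · exact hT _ ha _ hb hadj₀.symm
        · exact hab rfl
      have hlb : 1 ≤ indNum G := by
        apply le_csSup hIndBdd'
        exact ⟨{v₀}, Finset.card_singleton _, by
          intro a ha b hb
          simp only [Finset.mem_singleton] at ha hb
          subst ha; subst hb; exact G.irrefl⟩
      exact le_antisymm (csSup_le hIndNe hub) hlb
    -- coverNum ≤ 1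
    have hβ1 : coverNum G ≤ 1 := by
      apply Nat.sInf_le
      refine ⟨{v₀}, Finset.card_singleton _, ?_⟩
      intro a b hab
      rcases hall a with rfl | rfl
      · left; exact Finset.mem_singleton_self _
      · rcases hall b with rfl | rfl
        · right; exact Finset.mem_singleton_self _
        · exact absurd hab G.irrefl
    -- oidRNum ≥ 3
    have hsum3 : 3 ≤ ∑ x, f x := by
      have hsub : ({v₀, u₀} : Finset V) ⊆ univ := Finset.subset_univ _
      have hge : f v₀ + f u₀ ≤ ∑ x, f x := by
        have := Finset.sum_le_sum_of_subset (f := f) hsub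
        rwa [Finset.sum_pair hne] at this
      have hnbr : ∀ x, G.Adj v₀ x → x = u₀ := by
        intro x hx
        rcases hall x with h | h
        · subst h; exact absurd hx G.irrefl
        · exact h
      have hnbr' : ∀ x, G.Adj u₀ x → x = v₀ := by
        intro x hx
        rcases hall x with h | h
        · exact h
        · subst h; exact absurd hx G.irrefl
      have h3 : 3 ≤ f v₀ + f u₀ := by
        by_cases hv0 : f v₀ = 0
        · rcases hf.2.1 v₀ hv0 with ⟨x, hx, hx3⟩ | ⟨x, y, hxy, hxa, hya, -, -⟩
          · rw [hnbr x hx] at hx3; omega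
          · exact absurd ((hnbr x hxa).trans (hnbr y hya).symm) hxy
        · by_cases hu0 : f u₀ = 0
          · rcases hf.2.1 u₀ hu0 with ⟨x, hx, hx3⟩ | ⟨x, y, hxy, hxa, hya, -, -⟩
            · rw [hnbr' x hx] at hx3; omega
            · exact absurd ((hnbr' x hxa).trans (hnbr' y hya).symm) hxy
          · by_cases hv1 : f v₀ = 1
            · obtain ⟨x, hx, hx2⟩ := hf.2.2.1 v₀ hv1
              rw [hnbr x hx] at hx2; omega
            · omega
      omega
    have h3R : (3:ℝ) ≤ (oidRNum G : ℝ) := by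
      rw [heq']; exact_mod_cast hsum3
    have hβR : (coverNum G : ℝ) ≤ 1 := by exact_mod_cast hβ1
    rw [hΔeq, hα1]
    norm_num
    linarith
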